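/- The map π : \widehat{T}_n → \widehat{T}_n is a bijection. -/

import Mathlib

/-- Plane binary trees: every internal vertex has exactly two ordered children. -/
inductive PTree where
  | leaf : PTree
  | node : PTree → PTree → PTree
  deriving DecidableEq

namespace PTree

/-- number of leaves (endpoints) -/
def numLeaves : PTree → ℕ
  | leaf => 1
  | node l r => numLeaves l + numLeaves r

/-- directions of the leaves of a subtree which is itself a `b`-child
(`true` = left child, `false` = right child), in left-to-right order. -/
def dirsAux : PTree → Bool → List Bool
  | leaf, b => [b]
  | node l r, _ => dirsAux l true ++ dirsAux r false

/-- the left/right-child directions of all leaves of a tree, left to right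
(`true` = left child, `false` = right child). -/
def dirs : PTree → List Bool
  | leaf => []
  | node l r => dirsAux l true ++ dirsAux r false

/-- The reduction map `R`: the directions of the 2nd through (n+1)-th leaves;
`true` = • (occupied site, left child), `false` = ∘ (empty site, right child). -/
def red (T : PTree) : List Bool := ((dirs T).drop 1).dropLast

/-- number of internal vertices on the path from the leftmost leaf to the root
(root included). -/
def lCount : PTree → ℕ
  | leaf => 0
  | node l _ => lCount l + 1

/-- number of internal vertices on the path from the rightmost leaf to the root
(root included). -/
def rCount : PTree → ℕ
  | leaf => 0
  | node _ r => rCount r + 1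

/-- number of last branching vertices (internal vertices whose two children are leaves). -/
def lbCount : PTree → ℕ
  | leaf => 0
  | node leaf leaf => 1
  | node l r => lbCount l + lbCount r

end PTree

/-- Marked plane binary trees: a plane binary tree with exactly one of its
last branching vertices marked (the constructor `mark` is the marked vertex,
a vertex with two leaf children). -/
inductive MTree where
  | mark : MTree
  | nodeL : MTree → PTree → MTree
  | nodeR : PTree → MTree → MTree
  deriving DecidableEq

namespace MTree

/-- forgetful map to plane binary trees -/
def forget : MTree → PTree
  | mark => .node .leaf .leaf
  | nodeL l r => .node (forget l) r
  | nodeR l r => .node l (forget r)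

/-- collapse the marked vertex (with its two leaf children) to a single leaf. -/
def collapseT : MTree → PTree
  | mark => .leaf
  | nodeL l r => .node (collapseT l) r
  | nodeR l r => .node l (collapseT r)

/-- index (left to right, starting from 0) of the leaf of `collapseT` obtained
by collapsing the marked vertex. -/
def markIdx : MTree → ℕ
  | mark => 0
  | nodeL l _ => markIdx l
  | nodeR l r => l.numLeaves + markIdx r

end MTree

/-- replace the `i`-th leaf of a tree by a marked last branching vertex. -/
def expand : PTree → ℕ → MTree
  | .leaf, _ => .mark
  | .node l r, i =>
      if i < l.numLeaves then .nodeL (expand l i) r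
      else .nodeR l (expand r (i - l.numLeaves))

/-- index of the next right-child (`false`) leaf strictly after position `i`;
if there is none, the index of the rightmost left-child (`true`) leaf. -/
def nextFalseIdx (w : List Bool) (i : ℕ) : ℕ :=
  if (w.drop (i+1)).findIdx (fun b => !b) < (w.drop (i+1)).length
  then i + 1 + (w.drop (i+1)).findIdx (fun b => !b)
  else w.length - 1 - (w.reverse.findIdx (fun b => b))

/-- index of the closest left-child (`true`) leaf strictly before position `i`;
if there is none, the index of the leftmost right-child (`false`) leaf. -/
def prevTrueIdx (w : List Bool) (i : ℕ) : ℕ :=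
  if ((w.take i).reverse).findIdx (fun b => b) < i
  then i - 1 - ((w.take i).reverse).findIdx (fun b => b)
  else w.findIdx (fun b => !b)

/-- position of the leaf where the removed segment is re-glued by `π`. -/
def target (w : List Bool) (i : ℕ) : ℕ :=
  if w.getD i true then prevTrueIdx w i else nextFalseIdx w i

/-- The map `π` on marked trees: remove the segment joining the marked vertex to
its left (resp. right) leaf when the marked vertex is a right (resp. left) child,
and glue it to the next right- (resp. left-) child leaf to the right (resp. left),
with the boundary rule when no such leaf exists; the new vertex is marked. -/
def piM (M : MTree) : MTree :=
  expand M.collapseT (target M.collapseT.dirs M.markIdx)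

open Classical in
/-- Transition rates of the `n`-site open-boundary TASEP, on configurations
encoded as lists of booleans (`true` = •, `false` = ∘). -/
noncomputable def rate (α β : ℝ) (C C' : List Bool) : ℝ :=
  if ∃ A, C = false :: A ∧ C' = true :: A then α
  else if ∃ A, C = A ++ [true] ∧ C' = A ++ [false] then β
  else if ∃ A A', C = A ++ true :: false :: A' ∧ C' = A ++ false :: true :: A' then 1
  else 0

/-- number of active bonds of a configuration: injection at site 1 if empty,
extraction at site n if occupied, and hops across •∘ pairs. -/
def activeCount (C : List Bool) : ℕ :=
  (if C.head? = some false then 1 else 0) +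
  ((C.zip C.tail).count (true, false)) +
  (if C.getLast? = some true then 1 else 0)

/-- the weight `μ(T) = α^{-l(T)} β^{-r(T)}` of a plane binary tree. -/
noncomputable def mu (α β : ℝ) (T : PTree) : ℝ :=
  α ^ (-(T.lCount : ℤ)) * β ^ (-(T.rCount : ℤ))

/-- number of internal vertices on the path from the leftmost leaf to the root,
excluding the marked vertex. -/
def lCountM : MTree → ℕ
  | .mark => 0
  | .nodeL l _ => lCountM l + 1
  | .nodeR l _ => l.lCount + 1

/-- number of internal vertices on the path from the rightmost leaf to the root,
excluding the marked vertex. -/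
def rCountM : MTree → ℕ
  | .mark => 0
  | .nodeR _ r => rCountM r + 1
  | .nodeL _ r => r.rCount + 1

/-- the weight `μ̂` of a marked tree, excluding the marked vertex from the counts. -/
noncomputable def muHat (α β : ℝ) (M : MTree) : ℝ :=
  α ^ (-(lCountM M : ℤ)) * β ^ (-(rCountM M : ℤ))



section PiAux

open PTree MTree List

lemma numLeaves_pos (T : PTree) : 0 < T.numLeaves := by
  induction T with
  | leaf => simp [PTree.numLeaves]
  | node l r ihl ihr => simp only [PTree.numLeaves]; omega

lemma dirsAux_length (T : PTree) (b : Bool) : (T.dirsAux b).length = T.numLeaves := by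
  induction T generalizing b with
  | leaf => rfl
  | node l r ihl ihr => simp [PTree.dirsAux, PTree.numLeaves, ihl, ihr]

lemma dirs_length' (T : PTree) (h : T ≠ .leaf) : T.dirs.length = T.numLeaves := by
  cases T with
  | leaf => exact absurd rfl h
  | node l r => simp [PTree.dirs, PTree.numLeaves, dirsAux_length]

lemma true_mem_dirsAux (T : PTree) : true ∈ T.dirsAux true := by
  induction T with
  | leaf => simp [PTree.dirsAux]
  | node l r ihl ihr => simp only [PTree.dirsAux, List.mem_append]; exact Or.inl ihl

lemma false_mem_dirsAux (T : PTree) : false ∈ T.dirsAux false := by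
  induction T with
  | leaf => simp [PTree.dirsAux]
  | node l r ihl ihr => simp only [PTree.dirsAux, List.mem_append]; exact Or.inr ihr

lemma true_mem_dirs (T : PTree) (h : T ≠ .leaf) : true ∈ T.dirs := by
  cases T with
  | leaf => exact absurd rfl h
  | node l r => simp only [PTree.dirs, List.mem_append]; exact Or.inl (true_mem_dirsAux l)

lemma false_mem_dirs (T : PTree) (h : T ≠ .leaf) : false ∈ T.dirs := by
  cases T with
  | leaf => exact absurd rfl h
  | node l r => simp only [PTree.dirs, List.mem_append]; exact Or.inr (false_mem_dirsAux r)

/-! ### findIdx helpers (getElem? form) -/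

lemma findIdx_true_getElem? (w : List Bool) (h : w.findIdx (fun b => b) < w.length) :
    w[w.findIdx (fun b => b)]? = some true := by
  have h1 := List.findIdx_getElem (w := h)
  rw [List.getElem?_eq_getElem h]
  simpa using h1

lemma findIdx_false_getElem? (w : List Bool) (h : w.findIdx (fun b => !b) < w.length) :
    w[w.findIdx (fun b => !b)]? = some false := by
  have h1 := List.findIdx_getElem (w := h)
  rw [List.getElem?_eq_getElem h]
  simpa using h1

lemma before_findIdx_true (w : List Bool) {j : ℕ} (h : j < w.findIdx (fun b => b))
    (hj : j < w.length) : w[j]? = some false := by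
  have h1 := List.not_of_lt_findIdx h
  rw [List.getElem?_eq_getElem hj]
  simpa using h1

lemma before_findIdx_false (w : List Bool) {j : ℕ} (h : j < w.findIdx (fun b => !b))
    (hj : j < w.length) : w[j]? = some true := by
  have h1 := List.not_of_lt_findIdx h
  rw [List.getElem?_eq_getElem hj]
  simpa using h1

/-! ### specs for prevTrueIdx / nextFalseIdx -/

lemma prevTrue_spec (w : List Bool) (i : ℕ) (hi : i < w.length) :
    (prevTrueIdx w i < i ∧ w[prevTrueIdx w i]? = some true ∧
       ∀ j, prevTrueIdx w i < j → j < i → w[j]? = some false)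
    ∨ ((∀ j, j < i → w[j]? = some false) ∧
        prevTrueIdx w i = w.findIdx (fun b => !b)) := by
  have hrlen : ((w.take i).reverse).length = i := by simp; omega
  have hrget : ∀ m, m < i → ((w.take i).reverse)[m]? = w[i - 1 - m]? := by
    intro m hm
    rw [List.getElem?_reverse (by simp; omega), List.length_take,
      show min i w.length - 1 - m = i - 1 - m by omega, List.getElem?_take, if_pos (by omega)]
  unfold prevTrueIdx
  by_cases hc : ((w.take i).reverse).findIdx (fun b => b) < i
  · rw [if_pos hc]
    left
    refine ⟨by omega, ?_, ?_⟩
    · have h1 : ((w.take i).reverse)[((w.take i).reverse).findIdx (fun b => b)]? = some true :=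
        findIdx_true_getElem? _ (by omega)
      rwa [hrget _ hc] at h1
    · intro j h1j h2j
      have hm : i - 1 - j < ((w.take i).reverse).findIdx (fun b => b) := by omega
      have h2 := before_findIdx_true ((w.take i).reverse) hm (by omega)
      rw [hrget _ (by omega)] at h2
      rwa [show i - 1 - (i - 1 - j) = j by omega] at h2
  · rw [if_neg hc]
    right
    refine ⟨?_, rfl⟩
    intro j hj
    have hm : i - 1 - j < ((w.take i).reverse).findIdx (fun b => b) := by omega
    have h2 := before_findIdx_true ((w.take i).reverse) hm (by omega)
    rw [hrget _ (by omega)] at h2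
    rwa [show i - 1 - (i - 1 - j) = j by omega] at h2

lemma nextFalse_spec (w : List Bool) (i : ℕ) (hi : i < w.length) :
    (i < nextFalseIdx w i ∧ w[nextFalseIdx w i]? = some false ∧
       ∀ j, i < j → j < nextFalseIdx w i → w[j]? = some true)
    ∨ ((∀ j, i < j → j < w.length → w[j]? = some true) ∧
        nextFalseIdx w i = w.length - 1 - w.reverse.findIdx (fun b => b)) := by
  have hdget : ∀ m, (w.drop (i+1))[m]? = w[i + 1 + m]? := fun m => List.getElem?_drop
  have hdlen : (w.drop (i+1)).length = w.length - (i+1) := by simp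
  unfold nextFalseIdx
  by_cases hc : (w.drop (i+1)).findIdx (fun b => !b) < (w.drop (i+1)).length
  · rw [if_pos hc]
    left
    refine ⟨by omega, ?_, ?_⟩
    · have h1 := findIdx_false_getElem? _ hc
      rwa [hdget] at h1
    · intro j h1j h2j
      have hm : j - (i+1) < (w.drop (i+1)).findIdx (fun b => !b) := by omega
      have h2 := before_findIdx_false _ hm (by omega)
      rw [hdget] at h2
      rwa [show i + 1 + (j - (i+1)) = j by omega] at h2
  · rw [if_neg hc]
    right
    refine ⟨?_, rfl⟩
    intro j h1j h2j
    have hm : j - (i+1) < (w.drop (i+1)).findIdx (fun b => !b) := by omega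
    have h2 := before_findIdx_false _ hm (by omega)
    rw [hdget] at h2
    rwa [show i + 1 + (j - (i+1)) = j by omega] at h2

lemma leftmostFalse_spec (w : List Bool) (hf : false ∈ w) :
    w[w.findIdx (fun b => !b)]? = some false ∧
      ∀ j, j < w.findIdx (fun b => !b) → w[j]? = some true := by
  have h : w.findIdx (fun b => !b) < w.length :=
    List.findIdx_lt_length_of_exists ⟨false, hf, rfl⟩
  exact ⟨findIdx_false_getElem? w h, fun j hj => before_findIdx_false w hj (by omega)⟩

lemma rightmostTrue_spec (w : List Bool) (ht : true ∈ w) :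
    w[w.length - 1 - w.reverse.findIdx (fun b => b)]? = some true ∧
      ∀ j, w.length - 1 - w.reverse.findIdx (fun b => b) < j → j < w.length →
        w[j]? = some false := by
  have hlen : 0 < w.length := List.length_pos_iff.mpr (by rintro rfl; simp at ht)
  have h : w.reverse.findIdx (fun b => b) < w.reverse.length :=
    List.findIdx_lt_length_of_exists ⟨true, by simpa using ht, rfl⟩
  have hrget : ∀ m, m < w.length → w.reverse[m]? = w[w.length - 1 - m]? := by
    intro m hm
    exact List.getElem?_reverse hm
  have h' : w.reverse.findIdx (fun b => b) < w.length := by simpa using h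
  constructor
  · have h1 := findIdx_true_getElem? w.reverse h
    rwa [hrget _ h'] at h1
  · intro j h1j h2j
    have hm : w.length - 1 - j < w.reverse.findIdx (fun b => b) := by omega
    have h2 := before_findIdx_true w.reverse hm (by simp; omega)
    rw [hrget _ (by omega)] at h2
    rwa [show w.length - 1 - (w.length - 1 - j) = j by omega] at h2

/-! ### target specs -/

lemma targetSpecT (w : List Bool) (i : ℕ) (hi : i < w.length) (hwi : w[i]? = some true)
    (hf : false ∈ w) :
    (target w i < i ∧ w[target w i]? = some true ∧
       ∀ j, target w i < j → j < i → w[j]? = some false)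
    ∨ ((∀ j, j < i → w[j]? = some false) ∧ w[target w i]? = some false ∧
       ∀ j, j < target w i → w[j]? = some true) := by
  have hgd : w.getD i true = true := by rw [List.getD_eq_getElem?_getD, hwi]; rfl
  have ht : target w i = prevTrueIdx w i := by unfold target; rw [hgd]; simp
  rw [ht]
  rcases prevTrue_spec w i hi with h | ⟨h1, h2⟩
  · exact Or.inl h
  · right
    obtain ⟨h3, h4⟩ := leftmostFalse_spec w hf
    rw [h2]
    exact ⟨h1, h3, h4⟩

lemma targetSpecF (w : List Bool) (i : ℕ) (hi : i < w.length) (hwi : w[i]? = some false)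
    (ht : true ∈ w) :
    (i < target w i ∧ w[target w i]? = some false ∧
       ∀ j, i < j → j < target w i → w[j]? = some true)
    ∨ ((∀ j, i < j → j < w.length → w[j]? = some true) ∧ w[target w i]? = some true ∧
       ∀ j, target w i < j → j < w.length → w[j]? = some false) := by
  have hgd : w.getD i true = false := by rw [List.getD_eq_getElem?_getD, hwi]; rfl
  have htg : target w i = nextFalseIdx w i := by unfold target; rw [hgd]; simp
  rw [htg]
  rcases nextFalse_spec w i hi with h | ⟨h1, h2⟩
  · exact Or.inl h
  · right
    obtain ⟨h3, h4⟩ := rightmostTrue_spec w ht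
    rw [h2]
    exact ⟨h1, h3, h4⟩

lemma target_lt (w : List Bool) (i : ℕ) (hi : i < w.length) (ht : true ∈ w)
    (hf : false ∈ w) : target w i < w.length := by
  have hwi := List.getElem?_eq_getElem hi
  cases hb : w[i] with
  | true =>
    rw [hb] at hwi
    rcases targetSpecT w i hi hwi hf with ⟨_, h, _⟩ | ⟨_, h, _⟩ <;>
      exact (List.getElem?_eq_some_iff.mp h).1
  | false =>
    rw [hb] at hwi
    rcases targetSpecF w i hi hwi ht with ⟨_, h, _⟩ | ⟨_, h, _⟩ <;>
      exact (List.getElem?_eq_some_iff.mp h).1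

/-! ### injectivity of target -/

lemma target_ne_tt (w : List Bool) {i j : ℕ} (hij : i < j) (hj : j < w.length)
    (hwi : w[i]? = some true) (hwj : w[j]? = some true) (hf : false ∈ w) :
    target w i ≠ target w j := by
  intro heq
  have hi : i < w.length := lt_trans hij hj
  rcases targetSpecT w i hi hwi hf with ⟨a1, a2, a3⟩ | ⟨b1, b2, b3⟩ <;>
    rcases targetSpecT w j hj hwj hf with ⟨c1, c2, c3⟩ | ⟨d1, d2, d3⟩
  · have h := c3 i (by omega) hij
    rw [hwi] at h; simp at h
  · have h := d1 (target w i) (by omega)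
    rw [a2] at h; simp at h
  · rw [heq, c2] at b2; simp at b2
  · have h := d1 i hij
    rw [hwi] at h; simp at h

lemma target_ne_ff (w : List Bool) {i j : ℕ} (hij : i < j) (hj : j < w.length)
    (hwi : w[i]? = some false) (hwj : w[j]? = some false) (ht : true ∈ w) :
    target w i ≠ target w j := by
  intro heq
  have hi : i < w.length := lt_trans hij hj
  rcases targetSpecF w i hi hwi ht with ⟨a1, a2, a3⟩ | ⟨b1, b2, b3⟩ <;>
    rcases targetSpecF w j hj hwj ht with ⟨c1, c2, c3⟩ | ⟨d1, d2, d3⟩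
  · have h := a3 j hij (by omega)
    rw [hwj] at h; simp at h
  · rw [heq, d2] at a2; simp at a2
  · have h := b1 j hij hj
    rw [hwj] at h; simp at h
  · have h := b1 j hij hj
    rw [hwj] at h; simp at h

lemma target_ne_tf (w : List Bool) {i j : ℕ} (hi : i < w.length) (hj : j < w.length)
    (hwi : w[i]? = some true) (hwj : w[j]? = some false) :
    target w i ≠ target w j := by
  have ht : true ∈ w := by
    obtain ⟨h, h'⟩ := List.getElem?_eq_some_iff.mp hwi
    exact h' ▸ List.getElem_mem h
  have hf : false ∈ w := by
    obtain ⟨h, h'⟩ := List.getElem?_eq_some_iff.mp hwj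
    exact h' ▸ List.getElem_mem h
  intro heq
  rcases targetSpecT w i hi hwi hf with ⟨a1, a2, a3⟩ | ⟨b1, b2, b3⟩ <;>
    rcases targetSpecF w j hj hwj ht with ⟨c1, c2, c3⟩ | ⟨d1, d2, d3⟩
  · rw [heq, c2] at a2; simp at a2
  · have h := d3 i (by omega) hi
    rw [hwi] at h; simp at h
  · have h := b3 j (by omega)
    rw [hwj] at h; simp at h
  · rw [heq, d2] at b2; simp at b2

lemma target_injOn (w : List Bool) (ht : true ∈ w) (hf : false ∈ w) :
    Set.InjOn (target w) (Set.Iio w.length) := by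
  intro i hi j hj heq
  simp only [Set.mem_Iio] at hi hj
  by_contra hne
  have hwi := List.getElem?_eq_getElem hi
  have hwj := List.getElem?_eq_getElem hj
  cases hbi : w[i] <;> cases hbj : w[j] <;> rw [hbi] at hwi <;> rw [hbj] at hwj
  · rcases lt_or_gt_of_ne hne with h | h
    · exact target_ne_ff w h hj hwi hwj ht heq
    · exact target_ne_ff w h hi hwj hwi ht heq.symm
  · exact target_ne_tf w hj hi hwj hwi heq.symm
  · exact target_ne_tf w hi hj hwi hwj heq
  · rcases lt_or_gt_of_ne hne with h | h
    · exact target_ne_tt w h hj hwi hwj hf heq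
    · exact target_ne_tt w h hi hwj hwi hf heq.symm

/-! ### expand / collapse lemmas -/

lemma collapseT_expand (T : PTree) (i : ℕ) : (expand T i).collapseT = T := by
  induction T generalizing i with
  | leaf => rfl
  | node l r ihl ihr =>
    unfold expand
    by_cases h : i < l.numLeaves
    · rw [if_pos h]; simp [MTree.collapseT, ihl]
    · rw [if_neg h]; simp [MTree.collapseT, ihr]

lemma markIdx_expand (T : PTree) (i : ℕ) (hi : i < T.numLeaves) : (expand T i).markIdx = i := by
  induction T generalizing i with
  | leaf =>
    simp only [PTree.numLeaves] at hi
    simp only [expand, MTree.markIdx]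
    omega
  | node l r ihl ihr =>
    simp only [PTree.numLeaves] at hi
    unfold expand
    by_cases h : i < l.numLeaves
    · rw [if_pos h]; simp [MTree.markIdx, ihl i h]
    · rw [if_neg h]
      simp only [MTree.markIdx]
      rw [ihr _ (by omega)]
      omega

lemma markIdx_lt (M : MTree) : M.markIdx < M.collapseT.numLeaves := by
  induction M with
  | mark => simp [MTree.markIdx, MTree.collapseT, PTree.numLeaves]
  | nodeL l r ih =>
    have := numLeaves_pos r
    simp only [MTree.markIdx, MTree.collapseT, PTree.numLeaves]
    omega
  | nodeR l r ih =>
    simp only [MTree.markIdx, MTree.collapseT, PTree.numLeaves]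
    omega

lemma expand_collapse (M : MTree) : expand M.collapseT M.markIdx = M := by
  induction M with
  | mark => rfl
  | nodeL l r ih =>
    have h : l.markIdx < l.collapseT.numLeaves := markIdx_lt l
    simp only [MTree.collapseT, MTree.markIdx, expand]
    rw [if_pos h, ih]
  | nodeR l r ih =>
    simp only [MTree.collapseT, MTree.markIdx, expand]
    rw [if_neg (by omega)]
    rw [show l.numLeaves + r.markIdx - l.numLeaves = r.markIdx by omega, ih]

lemma forget_numLeaves (M : MTree) : M.forget.numLeaves = M.collapseT.numLeaves + 1 := by
  induction M with
  | mark => rfl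
  | nodeL l r ih => simp only [MTree.forget, MTree.collapseT, PTree.numLeaves]; omega
  | nodeR l r ih => simp only [MTree.forget, MTree.collapseT, PTree.numLeaves]; omega

lemma collapse_eq_leaf (M : MTree) (h : M.collapseT = .leaf) : M = .mark := by
  cases M with
  | mark => rfl
  | nodeL l r => simp [MTree.collapseT] at h
  | nodeR l r => simp [MTree.collapseT] at h

/-! ### finiteness -/

lemma ptree_finite (m : ℕ) : {T : PTree | T.numLeaves = m}.Finite := by
  induction m using Nat.strong_induction_on with
  | _ m ih =>
    apply Set.Finite.subset (s := {PTree.leaf} ∪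
      ⋃ a ∈ Set.Ioo 0 m, (fun p : PTree × PTree => PTree.node p.1 p.2) ''
        ({l : PTree | l.numLeaves = a} ×ˢ {r : PTree | r.numLeaves = m - a}))
    · apply Set.Finite.union (Set.finite_singleton _)
      apply Set.Finite.biUnion (Set.finite_Ioo 0 m)
      intro a ha
      exact (((ih a ha.2).prod (ih (m - a) (by
        rcases ha with ⟨h1, h2⟩; omega))).image _)
    · intro T hT
      simp only [Set.mem_setOf_eq] at hT
      cases T with
      | leaf => exact Or.inl rfl
      | node l r =>
        have h1 := numLeaves_pos l
        have h2 := numLeaves_pos r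
        simp only [PTree.numLeaves] at hT
        right
        simp only [Set.mem_iUnion, Set.mem_image, Set.mem_prod, Set.mem_setOf_eq, Set.mem_Ioo]
        exact ⟨l.numLeaves, ⟨h1, by omega⟩, (l, r),
          ⟨rfl, show r.numLeaves = m - l.numLeaves by omega⟩, rfl⟩

lemma mtree_finite (n : ℕ) : {M : MTree | M.forget.numLeaves = n}.Finite := by
  apply Set.Finite.of_finite_image (f := fun M => (M.collapseT, M.markIdx))
  · apply Set.Finite.subset ((ptree_finite (n - 1)).prod (Set.finite_Iio n))
    rintro ⟨T, k⟩ ⟨M, hM, hMe⟩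
    simp only [Set.mem_setOf_eq] at hM
    have h1 := forget_numLeaves M
    have h2 := markIdx_lt M
    obtain ⟨hT, hk⟩ := Prod.mk.injEq .. ▸ hMe
    constructor
    · simp only [Set.mem_setOf_eq, ← hT]; omega
    · simp only [Set.mem_Iio, ← hk]; omega
  · intro M _ M' _ h
    have h1 : M.collapseT = M'.collapseT := congrArg Prod.fst h
    have h2 : M.markIdx = M'.markIdx := congrArg Prod.snd h
    rw [← expand_collapse M, ← expand_collapse M', h1, h2]

/-! ### piM lemmas -/

lemma piM_forget_numLeaves (M : MTree) : (piM M).forget.numLeaves = M.forget.numLeaves := by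
  unfold piM
  rw [forget_numLeaves, collapseT_expand, ← forget_numLeaves]

lemma eq_leaf_of_numLeaves_one (T : PTree) (h : T.numLeaves = 1) : T = .leaf := by
  cases T with
  | leaf => rfl
  | node l r =>
    have := numLeaves_pos l
    have := numLeaves_pos r
    simp only [PTree.numLeaves] at h
    omega

lemma piM_injOn (n : ℕ) : Set.InjOn piM {M : MTree | M.forget.numLeaves = n + 2} := by
  intro M hM M' hM' heq
  simp only [Set.mem_setOf_eq] at hM hM'
  have hc : M.collapseT.numLeaves = n + 1 := by have := forget_numLeaves M; omega
  have hc' : M'.collapseT.numLeaves = n + 1 := by have := forget_numLeaves M'; omega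
  have hT : M.collapseT = M'.collapseT := by
    have h := congrArg MTree.collapseT heq
    unfold piM at h
    rwa [collapseT_expand, collapseT_expand] at h
  by_cases hleaf : M.collapseT = PTree.leaf
  · have hleaf' : M'.collapseT = PTree.leaf := hT ▸ hleaf
    rw [collapse_eq_leaf M hleaf, collapse_eq_leaf M' hleaf']
  · have hTne : M.collapseT ≠ .leaf := hleaf
    have hlen := dirs_length' M.collapseT hTne
    have htmem := true_mem_dirs M.collapseT hTne
    have hfmem := false_mem_dirs M.collapseT hTne
    have hi : M.markIdx < M.collapseT.dirs.length := by
      rw [hlen]; exact markIdx_lt M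
    have hi' : M'.markIdx < M.collapseT.dirs.length := by
      rw [hlen, hT]; exact markIdx_lt M'
    have htar : target M.collapseT.dirs M.markIdx < M.collapseT.numLeaves := by
      rw [← hlen]; exact target_lt _ _ hi htmem hfmem
    have htar' : target M.collapseT.dirs M'.markIdx < M.collapseT.numLeaves := by
      rw [← hlen]; exact target_lt _ _ hi' htmem hfmem
    have hmk : M.markIdx = M'.markIdx := by
      apply target_injOn M.collapseT.dirs htmem hfmem hi hi'
      have h := congrArg MTree.markIdx heq
      unfold piM at h
      rw [← hT] at h
      rwa [markIdx_expand _ _ htar, markIdx_expand _ _ htar'] at h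
    rw [← expand_collapse M, ← expand_collapse M', hT, hmk]

end PiAux

/-- `π : \widehat{T}_n → \widehat{T}_n` is a bijection. -/
theorem piM_bijective (n : ℕ) :
    Set.BijOn piM {M : MTree | M.forget.numLeaves = n + 2}
      {M : MTree | M.forget.numLeaves = n + 2} := by
  have hmaps : Set.MapsTo piM {M : MTree | M.forget.numLeaves = n + 2}
      {M : MTree | M.forget.numLeaves = n + 2} := by
    intro M hM
    simp only [Set.mem_setOf_eq] at hM ⊢
    rw [piM_forget_numLeaves]
    exact hM
  exact ((mtree_finite (n + 2)).injOn_iff_bijOn_of_mapsTo hmaps).mp (piM_injOn n)
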